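/- For n ≥ 5, the total restrained domination number of the complement of the path P_n equals 2, and for n = 4 it equals 4. -/

import Mathlib

open SimpleGraph

/-- `S` is a `k`-tuple total restrained dominating set of `G`: every vertex has at
least `k` neighbors in `S`, and every vertex outside `S` has at least `k` neighbors
outside `S`. -/
def IsKTRDS {V : Type*} (G : SimpleGraph V) (k : ℕ) (S : Set V) : Prop :=
  (∀ v : V, k ≤ (S ∩ G.neighborSet v).ncard) ∧
  (∀ v : V, v ∉ S → k ≤ (Sᶜ ∩ G.neighborSet v).ncard)

/-- `S` is a `k`-tuple total dominating set of `G`. -/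
def IsKTDS {V : Type*} (G : SimpleGraph V) (k : ℕ) (S : Set V) : Prop :=
  ∀ v : V, k ≤ (S ∩ G.neighborSet v).ncard

/-- The `k`-tuple total restrained domination number of `G`. -/
noncomputable def ktrdNum {V : Type*} (G : SimpleGraph V) (k : ℕ) : ℕ :=
  sInf {m | ∃ S : Set V, IsKTRDS G k S ∧ S.ncard = m}

/-- The `k`-tuple total domination number of `G`. -/
noncomputable def ktNum {V : Type*} (G : SimpleGraph V) (k : ℕ) : ℕ :=
  sInf {m | ∃ S : Set V, IsKTDS G k S ∧ S.ncard = m}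

/-- The `k`-tuple total restrained domatic number of `G`. -/
noncomputable def ktrdDomatic {V : Type*} (G : SimpleGraph V) (k : ℕ) : ℕ :=
  sSup {d | ∃ f : Fin d → Set V, (∀ i, IsKTRDS G k (f i)) ∧ ∀ v : V, ∃! i, v ∈ f i}

/-- The `k`-tuple total domatic number of `G`. -/
noncomputable def ktDomatic {V : Type*} (G : SimpleGraph V) (k : ℕ) : ℕ :=
  sSup {d | ∃ f : Fin d → Set V, (∀ i, IsKTDS G k (f i)) ∧ ∀ v : V, ∃! i, v ∈ f i}

lemma cadj {n : ℕ} {u v : Fin n} :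
    (pathGraph n)ᶜ.Adj u v ↔ (u.val + 2 ≤ v.val ∨ v.val + 2 ≤ u.val) := by
  simp only [compl_adj, pathGraph_adj, ne_eq, Fin.ext_iff]
  omega

lemma one_le_ncard_of_mem {V : Type*} [Finite V] {s : Set V} {a : V} (h : a ∈ s) :
    1 ≤ s.ncard :=
  (Set.ncard_pos s.toFinite).mpr ⟨a, h⟩

lemma exists_of_one_le_ncard {V : Type*} {s : Set V} (h : 1 ≤ s.ncard) :
    ∃ a, a ∈ s := by
  rw [Nat.one_le_iff_ne_zero] at h
  exact Set.nonempty_of_ncard_ne_zero h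

theorem stmt_7 (n : ℕ) (hn : 4 ≤ n) :
    ktrdNum (SimpleGraph.pathGraph n)ᶜ 1 = if n = 4 then 4 else 2 := by
  by_cases h4 : n = 4
  · subst h4
    rw [if_pos rfl]
    unfold ktrdNum
    have hmem : 4 ∈ {m | ∃ S : Set (Fin 4), IsKTRDS (pathGraph 4)ᶜ 1 S ∧ S.ncard = m} := by
      refine ⟨Set.univ, ⟨?_, ?_⟩, by simp [Set.ncard_univ]⟩
      · intro v
        apply one_le_ncard_of_mem (a := if v.val ≤ 1 then ⟨3, by omega⟩ else ⟨0, by omega⟩)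
        constructor
        · trivial
        · rw [mem_neighborSet, cadj]
          split <;> simp <;> omega
      · intro v hv; simp at hv
    refine le_antisymm (Nat.sInf_le hmem) (le_csInf ⟨4, hmem⟩ ?_)
    rintro m ⟨S, ⟨hd, hr⟩, rfl⟩
    have key : ∀ v : Fin 4, ∃ w, w ∈ S ∧ (pathGraph 4)ᶜ.Adj v w := by
      intro v
      obtain ⟨w, hw⟩ := exists_of_one_le_ncard (hd v)
      exact ⟨w, hw.1, hw.2⟩
    have h0 : (⟨0, by omega⟩ : Fin 4) ∈ S := by
      obtain ⟨w, hwS, hw⟩ := key ⟨2, by omega⟩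
      rw [cadj] at hw
      have hw4 := w.isLt
      have : w = ⟨0, by omega⟩ := by apply Fin.ext; simp at hw ⊢; omega
      exact this ▸ hwS
    have h3 : (⟨3, by omega⟩ : Fin 4) ∈ S := by
      obtain ⟨w, hwS, hw⟩ := key ⟨1, by omega⟩
      rw [cadj] at hw
      have hw4 := w.isLt
      have : w = ⟨3, by omega⟩ := by apply Fin.ext; simp at hw ⊢; omega
      exact this ▸ hwS
    have h1 : (⟨1, by omega⟩ : Fin 4) ∈ S := by
      by_contra hc
      obtain ⟨w, hw⟩ := exists_of_one_le_ncard (hr _ hc)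
      obtain ⟨hwS, hwN⟩ := hw
      rw [Set.mem_compl_iff] at hwS
      rw [mem_neighborSet, cadj] at hwN
      have hw4 := w.isLt
      have : w = ⟨3, by omega⟩ := by apply Fin.ext; simp at hwN ⊢; omega
      exact hwS (this ▸ h3)
    have h2 : (⟨2, by omega⟩ : Fin 4) ∈ S := by
      by_contra hc
      obtain ⟨w, hw⟩ := exists_of_one_le_ncard (hr _ hc)
      obtain ⟨hwS, hwN⟩ := hw
      rw [Set.mem_compl_iff] at hwS
      rw [mem_neighborSet, cadj] at hwN
      have hw4 := w.isLt
      have : w = ⟨0, by omega⟩ := by apply Fin.ext; simp at hwN ⊢; omega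
      exact hwS (this ▸ h0)
    have hS : S = Set.univ := by
      ext v
      simp only [Set.mem_univ, iff_true]
      have hv4 := v.isLt
      interval_cases h : v.val
      all_goals {
        first
        | exact (show v = ⟨0, by omega⟩ from Fin.ext h) ▸ h0
        | exact (show v = ⟨1, by omega⟩ from Fin.ext h) ▸ h1
        | exact (show v = ⟨2, by omega⟩ from Fin.ext h) ▸ h2
        | exact (show v = ⟨3, by omega⟩ from Fin.ext h) ▸ h3 }
    rw [hS]; simp [Set.ncard_univ]
  · rw [if_neg h4]
    have hn5 : 5 ≤ n := by omega
    unfold ktrdNum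
    have hmem : 2 ∈ {m | ∃ S : Set (Fin n), IsKTRDS (pathGraph n)ᶜ 1 S ∧ S.ncard = m} := by
      refine ⟨{⟨0, by omega⟩, ⟨3, by omega⟩}, ⟨?_, ?_⟩, ?_⟩
      · intro v
        by_cases hv : 2 ≤ v.val
        · apply one_le_ncard_of_mem (a := (⟨0, by omega⟩ : Fin n))
          exact ⟨Or.inl rfl, by rw [mem_neighborSet, cadj]; simp; omega⟩
        · apply one_le_ncard_of_mem (a := (⟨3, by omega⟩ : Fin n))
          exact ⟨Or.inr rfl, by rw [mem_neighborSet, cadj]; simp; omega⟩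
      · intro v hv
        simp only [Set.mem_insert_iff, Set.mem_singleton_iff, not_or, Fin.ext_iff] at hv
        have hvn := v.isLt
        by_cases hv1 : v.val = 1
        · apply one_le_ncard_of_mem (a := (⟨4, by omega⟩ : Fin n))
          refine ⟨?_, by rw [mem_neighborSet, cadj]; simp; omega⟩
          simp only [Set.mem_compl_iff, Set.mem_insert_iff, Set.mem_singleton_iff, not_or,
            Fin.ext_iff, Fin.val_mk]
          omega
        · by_cases hv2 : v.val + 2 ≤ n - 1
          · apply one_le_ncard_of_mem (a := (⟨v.val + 2, by omega⟩ : Fin n))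
            refine ⟨?_, by rw [mem_neighborSet, cadj]; simp⟩
            simp only [Set.mem_compl_iff, Set.mem_insert_iff, Set.mem_singleton_iff, not_or,
              Fin.ext_iff, Fin.val_mk]
            omega
          · apply one_le_ncard_of_mem (a := (⟨1, by omega⟩ : Fin n))
            refine ⟨?_, by rw [mem_neighborSet, cadj]; simp; omega⟩
            simp only [Set.mem_compl_iff, Set.mem_insert_iff, Set.mem_singleton_iff, not_or,
              Fin.ext_iff, Fin.val_mk]
            omega
      · rw [Set.ncard_pair]; simp [Fin.ext_iff]
    refine le_antisymm (Nat.sInf_le hmem) (le_csInf ⟨2, hmem⟩ ?_)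
    rintro m ⟨S, ⟨hd, _⟩, rfl⟩
    obtain ⟨w, hwS, _⟩ := exists_of_one_le_ncard (hd ⟨0, by omega⟩)
    obtain ⟨w', hw'S, hw'N⟩ := exists_of_one_le_ncard (hd w)
    have hne : w' ≠ w := fun h => (pathGraph n)ᶜ.loopless.irrefl w (h ▸ hw'N)
    exact (Set.one_lt_ncard S.toFinite).mpr ⟨w, hwS, w', hw'S, hne.symm⟩
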